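/- arXiv:2604.06920 — 2 statements merged into one kernel-verified Lean document; each statement's English description precedes it below -/
import Mathlib

section
/- Let V be a finite type with at least k+1 elements and let k ≥ 2. Then the SOS graph of the family O = {o : Finset V | 0 < |o| ≤ k} (the set of output sets of validity-less k-set agreement) is a connected graph. -/
/-- The SOS graph of a family `O` of finite subsets of `V`: vertices are the
elements of `O`, and two vertices are adjacent iff one strictly includes the other. -/
def sosGraph {V : Type*} (O : Set (Finset V)) : SimpleGraph O where
  Adj o o' := (o : Finset V) ⊂ (o' : Finset V) ∨ (o' : Finset V) ⊂ (o : Finset V)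
  symm := ⟨fun _ _ h => h.symm⟩
  loopless := ⟨fun _ h => h.elim (fun h' => ssubset_irrefl _ h') (fun h' => ssubset_irrefl _ h')⟩

/-- For a finite universe `V` with at least `k+1` values and `k ≥ 2`, the SOS graph of
validity-less `k`-set agreement (all nonempty output sets of cardinality at most `k`)
is connected. -/
theorem sosGraph_kSetAgreement_connected
    {V : Type*} [Fintype V] (k : ℕ) (hk : 2 ≤ k) (hV : k + 1 ≤ Fintype.card V) :
    (sosGraph {o : Finset V | 0 < o.card ∧ o.card ≤ k}).Connected := by
  classical
  set O : Set (Finset V) := {o : Finset V | 0 < o.card ∧ o.card ≤ k} with hO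
  have hsing : ∀ v : V, ({v} : Finset V) ∈ O := by
    intro v; constructor <;> simp; omega
  -- reach from any vertex to a singleton inside it
  have hstep : ∀ o : O, ∀ v : V, v ∈ o.1 →
      (sosGraph O).Reachable o ⟨{v}, hsing v⟩ := by
    intro o v hv
    by_cases h : o.1 = {v}
    · have : o = ⟨{v}, hsing v⟩ := Subtype.ext h
      rw [this]
    · refine SimpleGraph.Adj.reachable ?_
      right
      exact Finset.ssubset_iff_subset_ne.mpr ⟨Finset.singleton_subset_iff.mpr hv, fun e => h e.symm⟩
  have hpair : ∀ v w : V, (sosGraph O).Reachable ⟨{v}, hsing v⟩ ⟨{w}, hsing w⟩ := by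
    intro v w
    by_cases hvw : v = w
    · subst hvw; exact SimpleGraph.Reachable.refl _
    · have hmem : ({v, w} : Finset V) ∈ O := by
        constructor
        · simp
        · have : ({v, w} : Finset V).card = 2 := Finset.card_pair hvw
          omega
      have h1 : (sosGraph O).Adj ⟨{v}, hsing v⟩ ⟨{v, w}, hmem⟩ := by
        left
        refine Finset.ssubset_iff_subset_ne.mpr ⟨by simp, ?_⟩
        intro e
        have he : ({v} : Finset V) = {v, w} := e
        have : w ∈ ({v} : Finset V) := he ▸ (by simp : w ∈ ({v, w} : Finset V))
        simp at this; exact hvw this.symm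
      have h2 : (sosGraph O).Adj ⟨{v, w}, hmem⟩ ⟨{w}, hsing w⟩ := by
        right
        refine Finset.ssubset_iff_subset_ne.mpr ⟨by simp, ?_⟩
        intro e
        have he : ({w} : Finset V) = {v, w} := e
        have : v ∈ ({w} : Finset V) := he ▸ (by simp : v ∈ ({v, w} : Finset V))
        simp at this; exact hvw this
      exact (h1.reachable).trans h2.reachable
  rw [SimpleGraph.connected_iff]
  constructor
  · intro o o'
    obtain ⟨v, hv⟩ := Finset.card_pos.mp o.2.1
    obtain ⟨w, hw⟩ := Finset.card_pos.mp o'.2.1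
    exact ((hstep o v hv).trans (hpair v w)).trans (hstep o' w hw).symm
  · have : 0 < Fintype.card V := by omega
    obtain ⟨v⟩ := Fintype.card_pos_iff.mp this
    exact ⟨⟨{v}, hsing v⟩⟩
end

section
/- Let V be a finite type with at least k+1 elements and let k ≥ 1. Then the SOS graph of the family O = {o : Finset V | 0 < |o| ≤ k} is connected if and only if k ≥ 2. (In particular, for k = 1 the graph has at least two vertices and no edges, so it is disconnected.) -/
/-- For a finite universe `V` with at least `k+1` values and `k ≥ 1`, the SOS graph of
the family of all nonempty output sets of cardinality at most `k` is connected
if and only if `k ≥ 2`. -/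
theorem sosGraph_kSetAgreement_connected_iff
    {V : Type*} [Fintype V] (k : ℕ) (hk : 1 ≤ k) (hV : k + 1 ≤ Fintype.card V) :
    (sosGraph {o : Finset V | 0 < o.card ∧ o.card ≤ k}).Connected ↔ 2 ≤ k := by
  set O : Set (Finset V) := {o : Finset V | 0 < o.card ∧ o.card ≤ k} with hO
  constructor
  · intro hconn
    by_contra h
    push_neg at h
    have hk1 : k = 1 := by omega
    subst hk1
    obtain ⟨v, w, hvw⟩ := Fintype.exists_pair_of_one_lt_card (by omega : 1 < Fintype.card V)
    have hvm : ({v} : Finset V) ∈ O := by simp [hO]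
    have hwm : ({w} : Finset V) ∈ O := by simp [hO]
    have hreach := hconn.preconnected ⟨{v}, hvm⟩ ⟨{w}, hwm⟩
    obtain ⟨p⟩ := hreach
    have hne : (⟨{v}, hvm⟩ : O) ≠ ⟨{w}, hwm⟩ := by
      intro h'
      exact hvw (by simpa using congrArg Subtype.val h')
    have hnn : ¬ p.Nil := SimpleGraph.Walk.not_nil_of_ne hne
    obtain ⟨c, hadj, -, -⟩ := SimpleGraph.Walk.not_nil_iff.mp hnn
    have hc1 : (c : Finset V).card = 1 := by
      have h2c : 0 < (c : Finset V).card ∧ (c : Finset V).card ≤ 1 := c.2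
      omega
    rcases hadj with h' | h'
    · have := Finset.card_lt_card h'
      simp_all
    · have := Finset.card_lt_card h'
      simp_all
  · intro h2
    classical
    have hne : Nonempty V := Fintype.card_pos_iff.mp (by omega)
    have hsingle : ∀ x : V, ({x} : Finset V) ∈ O := by
      intro x; simp [hO]; omega
    obtain ⟨v⟩ := hne
    rw [SimpleGraph.connected_iff_exists_forall_reachable]
    refine ⟨⟨{v}, hsingle v⟩, ?_⟩
    have key : ∀ o : O, ∃ x : V, (sosGraph O).Reachable o ⟨{x}, hsingle x⟩ := by
      intro o
      have hpos := o.2.1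
      obtain ⟨x, hx⟩ := Finset.card_pos.mp hpos
      refine ⟨x, ?_⟩
      by_cases heq : (o : Finset V) = {x}
      · exact (SimpleGraph.Reachable.refl _).mono le_rfl |>.mono le_rfl |>.trans
          (by rw [show o = (⟨{x}, hsingle x⟩ : O) from Subtype.ext heq])
      · apply SimpleGraph.Adj.reachable
        right
        exact (Finset.singleton_subset_iff.mpr hx).ssubset_of_ne (Ne.symm heq)
    have singles : ∀ x y : V, (sosGraph O).Reachable ⟨{x}, hsingle x⟩ ⟨{y}, hsingle y⟩ := by
      intro x y
      by_cases hxy : x = y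
      · subst hxy; rfl
      · have hmid : ({x, y} : Finset V) ∈ O := by
          constructor
          · simp
          · have : ({x, y} : Finset V).card = 2 := Finset.card_pair hxy
            omega
        have h1 : (sosGraph O).Adj ⟨{x}, hsingle x⟩ ⟨{x, y}, hmid⟩ := by
          left
          refine Finset.ssubset_iff_of_subset (by simp) |>.mpr ⟨y, by simp, by simp [Ne.symm hxy]⟩
        have h2' : (sosGraph O).Adj ⟨{x, y}, hmid⟩ ⟨{y}, hsingle y⟩ := by
          right
          refine Finset.ssubset_iff_of_subset (by simp) |>.mpr ⟨x, by simp, by simp [hxy]⟩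
        exact h1.reachable.trans h2'.reachable
    intro b
    obtain ⟨xa, ha⟩ := key ⟨{v}, hsingle v⟩
    obtain ⟨xb, hb⟩ := key b
    exact ha.trans ((singles xa xb).trans hb.symm)
end
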